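/- Let k ≥ 0 and let v = (v₁, v₂) with v₁, v₂ ∈ P_k be a divergence-free polynomial vector field, i.e. ∂v₁/∂x + ∂v₂/∂y = 0. Then there exists a polynomial ψ ∈ P_{k+1} such that v = curl ψ, i.e. v₁ = −∂ψ/∂y and v₂ = ∂ψ/∂x. In other words, the map curl : P_{k+1} → {v ∈ (P_k)² : div v = 0} is surjective. -/

import Mathlib

open MvPolynomial

noncomputable def intV (i : Fin 2) : MvPolynomial (Fin 2) ℝ →ₗ[ℝ] MvPolynomial (Fin 2) ℝ :=
  Finsupp.lsum ℝ (fun m => ((m i + 1 : ℝ))⁻¹ • (monomial (m + Finsupp.single i 1))) ∘ₗ (AddMonoidAlgebra.coeffLinearEquiv ℝ).toLinearMap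

noncomputable def killI (i : Fin 2) : MvPolynomial (Fin 2) ℝ →ₗ[ℝ] MvPolynomial (Fin 2) ℝ :=
  Finsupp.lsum ℝ (fun m => if m i = 0 then (monomial m) else 0) ∘ₗ (AddMonoidAlgebra.coeffLinearEquiv ℝ).toLinearMap

lemma intV_monomial (i : Fin 2) (m : Fin 2 →₀ ℕ) (c : ℝ) :
    intV i (monomial m c) = monomial (m + Finsupp.single i 1) (((m i : ℝ) + 1)⁻¹ * c) := by
  rw [← single_eq_monomial, intV]
  simp [smul_monomial]

lemma killI_monomial (i : Fin 2) (m : Fin 2 →₀ ℕ) (c : ℝ) :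
    killI i (monomial m c) = if m i = 0 then monomial m c else 0 := by
  rw [← single_eq_monomial, killI]
  split <;> simp [single_eq_monomial, *]

lemma pderiv_intV (i : Fin 2) (p : MvPolynomial (Fin 2) ℝ) :
    pderiv i (intV i p) = p := by
  induction p using MvPolynomial.induction_on' with
  | monomial m c =>
    rw [intV_monomial, pderiv_monomial]
    have h1 : (m + Finsupp.single i 1 : Fin 2 →₀ ℕ) i = m i + 1 := by simp
    have h2 : (m + Finsupp.single i 1) - Finsupp.single i 1 = m := add_tsub_cancel_right _ _
    rw [h1, h2]
    congr 1
    push_cast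
    field_simp
  | add p q hp hq => rw [map_add, map_add, hp, hq]

lemma pderiv_intV_comm {i j : Fin 2} (h : i ≠ j) (p : MvPolynomial (Fin 2) ℝ) :
    pderiv i (intV j p) = intV j (pderiv i p) := by
  induction p using MvPolynomial.induction_on' with
  | monomial m c =>
    rw [intV_monomial, pderiv_monomial, pderiv_monomial, intV_monomial]
    have h1 : (m + Finsupp.single j 1 : Fin 2 →₀ ℕ) i = m i := by
      simp [Finsupp.single_apply, (Ne.symm h : j ≠ i)]
    have h2 : (m - Finsupp.single i 1 : Fin 2 →₀ ℕ) j = m j := by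
      simp [Finsupp.tsub_apply, Finsupp.single_apply, h]
    have h3 : m + Finsupp.single j 1 - Finsupp.single i 1
        = m - Finsupp.single i 1 + Finsupp.single j 1 := by
      ext a
      simp only [Finsupp.tsub_apply, Finsupp.add_apply, Finsupp.single_apply]
      rcases eq_or_ne i a with rfl | hi
      · simp [Ne.symm h]
      · rcases eq_or_ne j a with rfl | hj
        · simp [hi]
        · simp [hi, hj]
    rw [h1, h2, h3]
    ring_nf
  | add p q hp hq => simp only [map_add, hp, hq]

lemma intV_pderiv (i : Fin 2) (p : MvPolynomial (Fin 2) ℝ) :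
    intV i (pderiv i p) + killI i p = p := by
  induction p using MvPolynomial.induction_on' with
  | monomial m c =>
    rw [pderiv_monomial, intV_monomial, killI_monomial]
    by_cases hm : m i = 0
    · simp [hm]
    · rw [if_neg hm]
      have h2 : (m - Finsupp.single i 1) + Finsupp.single i 1 = m := by
        ext a
        simp only [Finsupp.tsub_apply, Finsupp.add_apply, Finsupp.single_apply]
        by_cases ha : i = a
        · subst ha; simp; omega
        · simp [ha]
      have h3 : (m - Finsupp.single i 1 : Fin 2 →₀ ℕ) i = m i - 1 := by
        simp [Finsupp.tsub_apply]
      rw [h2, h3, add_zero]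
      congr 1
      have : ((m i - 1 : ℕ) : ℝ) + 1 = (m i : ℝ) := by
        have := Nat.succ_pred_eq_of_pos (Nat.pos_of_ne_zero hm)
        push_cast [Nat.cast_pred (Nat.pos_of_ne_zero hm)]
        ring
      rw [this]
      have hne : (m i : ℝ) ≠ 0 := Nat.cast_ne_zero.mpr hm
      field_simp
  | add p q hp hq =>
    rw [map_add, map_add, map_add]
    linear_combination hp + hq

lemma pderiv_killI (i : Fin 2) (p : MvPolynomial (Fin 2) ℝ) :
    pderiv i (killI i p) = 0 := by
  induction p using MvPolynomial.induction_on' with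
  | monomial m c =>
    rw [killI_monomial]
    split
    · rename_i hm
      rw [pderiv_monomial, hm]
      simp
    · simp
  | add p q hp hq => rw [map_add, map_add, hp, hq, add_zero]

lemma totalDegree_intV (i : Fin 2) (p : MvPolynomial (Fin 2) ℝ) :
    (intV i p).totalDegree ≤ p.totalDegree + 1 := by
  conv_lhs => rw [p.as_sum, map_sum]
  refine (totalDegree_finset_sum _ _).trans (Finset.sup_le fun m hm => ?_)
  rw [intV_monomial]
  refine (totalDegree_monomial_le _ _).trans ?_
  rw [Finsupp.sum_add_index (by simp) (by simp),
    Finsupp.sum_single_index (by rfl)]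
  exact Nat.add_le_add_right (le_totalDegree hm) 1

lemma totalDegree_killI (i : Fin 2) (p : MvPolynomial (Fin 2) ℝ) :
    (killI i p).totalDegree ≤ p.totalDegree := by
  conv_lhs => rw [p.as_sum, map_sum]
  refine (totalDegree_finset_sum _ _).trans (Finset.sup_le fun m hm => ?_)
  rw [killI_monomial]
  split
  · exact (totalDegree_monomial_le _ _).trans (le_totalDegree hm)
  · simp

/-- Every divergence-free polynomial vector field `v = (v₁, v₂)` of total degree at most `k`
is the curl of a scalar polynomial `ψ` of total degree at most `k+1`, i.e.
`v₁ = −∂ψ/∂y` and `v₂ = ∂ψ/∂x`: the map `curl : P_{k+1} → {v ∈ (P_k)² : div v = 0}`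
is surjective. -/
theorem curl_surjective_onto_divFree (k : ℕ) (v₁ v₂ : MvPolynomial (Fin 2) ℝ)
    (h₁ : v₁.totalDegree ≤ k) (h₂ : v₂.totalDegree ≤ k)
    (hdiv : pderiv 0 v₁ + pderiv 1 v₂ = 0) :
    ∃ ψ : MvPolynomial (Fin 2) ℝ, ψ.totalDegree ≤ k + 1 ∧
      v₁ = -(pderiv 1 ψ) ∧ v₂ = pderiv 0 ψ := by
  refine ⟨intV 0 v₂ - intV 1 (killI 0 v₁), ?_, ?_, ?_⟩
  · rw [sub_eq_add_neg]
    refine (totalDegree_add _ _).trans (max_le ?_ ?_)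
    · exact (totalDegree_intV 0 v₂).trans (by omega)
    · rw [totalDegree_neg]
      refine (totalDegree_intV 1 _).trans ?_
      have := (totalDegree_killI 0 v₁).trans h₁
      omega
  · rw [map_sub, pderiv_intV, pderiv_intV_comm (by decide : (1:Fin 2) ≠ 0)]
    have hv : pderiv 1 v₂ = -pderiv 0 v₁ := by linear_combination hdiv
    rw [hv, map_neg]
    have h4 := intV_pderiv 0 v₁
    linear_combination -h4
  · rw [map_sub, pderiv_intV, pderiv_intV_comm (by decide : (0:Fin 2) ≠ 1), pderiv_killI,
      map_zero, sub_zero]
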